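/- Define G₂(n) = Σ_{d | n} Σ_{x > y ≥ 1, gcd(x,y)=1, Y(n,d,x,y) > 1} [ (1/x)·Σ_{1 ≤ m < Y(n,d,x,y)} ( A(n,d,x) + B(x,y)·m ) − (1/x)·( A(n,d,x)·Y(n,d,x,y) + B(x,y)·Y(n,d,x,y)²/2 ) ], where the inner sum runs over integers m. Then for every ε > 0 there is a constant K(ε) > 0 such that |G₂(n)| ≤ K(ε)·n^{3/2+ε} for all positive integers n. -/

import Mathlib

open Finset

/-- `Y(n,d,x,y) = min( n/(d(x+y)) , (n - d²x²)/(dy) )`. -/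
noncomputable def Ybound (n d x y : ℕ) : ℝ :=
  min ((n : ℝ) / ((d : ℝ) * ((x : ℝ) + y)))
      (((n : ℝ) - (d : ℝ) ^ 2 * (x : ℝ) ^ 2) / ((d : ℝ) * y))

/-- `A(n,d,x) = n/(dx) + dx`. -/
noncomputable def Aterm (n d x : ℕ) : ℝ := (n : ℝ) / ((d : ℝ) * x) + (d : ℝ) * x

/-- `B(x,y) = -y/x`. -/
noncomputable def Bterm (x y : ℕ) : ℝ := -((y : ℝ) / x)

/-- `G₂(n)`; the inner sum `Σ_{1 ≤ m < Y}` runs over the integers `m` with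
`1 ≤ m < Y(n,d,x,y)`, i.e. over `m ∈ Finset.Ico 1 ⌈Y⌉₊`. -/
noncomputable def Gtwo (n : ℕ) : ℝ :=
  ∑ d ∈ n.divisors,
    ∑' p : ℕ × ℕ,
      if p.2 < p.1 ∧ 1 ≤ p.2 ∧ Nat.gcd p.1 p.2 = 1 ∧ 1 < Ybound n d p.1 p.2 then
        (1 / (p.1 : ℝ)) *
            (∑ m ∈ Finset.Ico 1 ⌈Ybound n d p.1 p.2⌉₊, (Aterm n d p.1 + Bterm p.1 p.2 * m))
          - (1 / (p.1 : ℝ)) *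
            (Aterm n d p.1 * Ybound n d p.1 p.2 + Bterm p.1 p.2 * (Ybound n d p.1 p.2) ^ 2 / 2)
      else 0

/-- The summand of the inner tsum in `Gtwo`. -/
noncomputable def Gf (n d : ℕ) (p : ℕ × ℕ) : ℝ :=
  if p.2 < p.1 ∧ 1 ≤ p.2 ∧ Nat.gcd p.1 p.2 = 1 ∧ 1 < Ybound n d p.1 p.2 then
    (1 / (p.1 : ℝ)) *
        (∑ m ∈ Finset.Ico 1 ⌈Ybound n d p.1 p.2⌉₊, (Aterm n d p.1 + Bterm p.1 p.2 * m))
      - (1 / (p.1 : ℝ)) *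
        (Aterm n d p.1 * Ybound n d p.1 p.2 + Bterm p.1 p.2 * (Ybound n d p.1 p.2) ^ 2 / 2)
  else 0

lemma sq_sum_bound : ∀ n : ℕ, ∑ d ∈ Finset.Icc 1 (n+1), (1:ℝ)/(d:ℝ)^2 ≤ 2 - 1/(n+1) := by
  intro n
  induction n with
  | zero => norm_num
  | succ k ih =>
    rw [show k + 1 + 1 = (k+1) + 1 from rfl, Finset.sum_Icc_succ_top (by omega)]
    have h1 : ((k:ℝ)+1) > 0 := by positivity
    have h2 : ((k:ℝ)+1+1) > 0 := by positivity
    have : (1:ℝ)/((k:ℝ)+1+1)^2 ≤ 1/((k:ℝ)+1) - 1/((k:ℝ)+1+1) := by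
      rw [div_sub_div _ _ (ne_of_gt h1) (ne_of_gt h2), div_le_div_iff₀ (by positivity) (by positivity)]
      ring_nf
      nlinarith
    push_cast
    push_cast at ih
    linarith

/-- facts forced by the condition -/
lemma cond_facts (n d x y : ℕ) (hd : 1 ≤ d) (hy : 1 ≤ y) (hxy : y < x)
    (hY : 1 < Ybound n d x y) :
    x < n ∧ y < n ∧ d * x * (d * x) ≤ n := by
  have hd0 : (0:ℝ) < d := by exact_mod_cast hd
  have hy0 : (0:ℝ) < y := by exact_mod_cast hy
  have hx1 : 1 ≤ x := hy.trans hxy.le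
  have hx0 : (0:ℝ) < x := by exact_mod_cast hx1
  have hyx : (y:ℝ) < x := by exact_mod_cast hxy
  rw [Ybound, lt_min_iff] at hY
  obtain ⟨h1, h2⟩ := hY
  have hden1 : (0:ℝ) < (d:ℝ) * ((x:ℝ) + y) := by positivity
  have hden2 : (0:ℝ) < (d:ℝ) * y := by positivity
  rw [lt_div_iff₀ hden1] at h1
  rw [lt_div_iff₀ hden2] at h2
  have hd1 : (1:ℝ) ≤ d := by exact_mod_cast hd
  have hmul : 1 * ((x:ℝ) + y) ≤ (d:ℝ) * ((x:ℝ) + y) :=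
    mul_le_mul_of_nonneg_right hd1 (by positivity)
  have hxR : (x:ℝ) < n := by nlinarith
  have hyR : (y:ℝ) < n := by nlinarith
  have hsq : ((d:ℝ) * x) * ((d:ℝ) * x) ≤ (n:ℝ) := by nlinarith
  refine ⟨by exact_mod_cast hxR, by exact_mod_cast hyR, ?_⟩
  have : ((d * x * (d * x) : ℕ) : ℝ) ≤ (n:ℝ) := by push_cast; nlinarith
  exact_mod_cast this

set_option maxHeartbeats 1000000 in
/-- per-pair bound -/
lemma term_bound (n d x y : ℕ) (hd : 1 ≤ d) :
    |Gf n d (x, y)| ≤ 3 * n / ((d:ℝ) * (x:ℝ)^2) := by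
  by_cases hc : y < x ∧ 1 ≤ y ∧ Nat.gcd x y = 1 ∧ 1 < Ybound n d x y
  swap
  · simp only [Gf, hc, if_false]
    rw [abs_zero]
    positivity
  obtain ⟨hxy, hy, hgcd, hY⟩ := hc
  have hd0 : (0:ℝ) < d := by exact_mod_cast hd
  have hy0 : (0:ℝ) < y := by exact_mod_cast hy
  have hx1 : 1 ≤ x := hy.trans hxy.le
  have hx0 : (0:ℝ) < x := by exact_mod_cast hx1
  have hyx : (y:ℝ) < x := by exact_mod_cast hxy
  set Y := Ybound n d x y with hYdef
  set N := ⌈Y⌉₊ with hNdef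
  set A := Aterm n d x with hAdef
  set B := Bterm x y with hBdef
  have hY0 : (0:ℝ) < Y := zero_lt_one.trans hY
  have hdx0 : (0:ℝ) < (d:ℝ) * x := by positivity
  have hdy0 : (0:ℝ) < (d:ℝ) * y := by positivity
  have hYx : Y ≤ (n:ℝ) / ((d:ℝ) * x) := by
    refine (min_le_left _ _).trans ?_
    exact div_le_div_of_nonneg_left (Nat.cast_nonneg n) hdx0 (by nlinarith)
  have hb : Y ≤ ((n:ℝ) - (d:ℝ)^2 * (x:ℝ)^2) / ((d:ℝ) * y) := min_le_right _ _
  have hsq : (d:ℝ)^2 * (x:ℝ)^2 < n := by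
    have h2 := hY.trans_le hb
    rw [lt_div_iff₀ hdy0] at h2
    nlinarith
  have hn0 : (0:ℝ) < n := by nlinarith
  have hA2 : A ≤ 2 * ((n:ℝ) / ((d:ℝ) * x)) := by
    have h1 : (d:ℝ) * x ≤ (n:ℝ) / ((d:ℝ) * x) := by
      rw [le_div_iff₀ hdx0]; nlinarith
    have h2 : 2 * ((n:ℝ) / ((d:ℝ) * x)) = (n:ℝ) / ((d:ℝ) * x) + (n:ℝ) / ((d:ℝ) * x) := by
      ring
    rw [hAdef, Aterm, h2]
    linarith
  have hApos : 0 < A := by rw [hAdef, Aterm]; positivity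
  have hB1 : |B| ≤ 1 := by
    rw [hBdef, Bterm, abs_neg, abs_div, abs_of_nonneg (Nat.cast_nonneg y),
      abs_of_nonneg (Nat.cast_nonneg x), div_le_one hx0]
    exact hyx.le
  -- facts about N
  have hYN : Y ≤ (N:ℝ) := Nat.le_ceil Y
  have hNY : (N:ℝ) < Y + 1 := Nat.ceil_lt_add_one hY0.le
  have hN1 : 1 ≤ N := by
    have : 1 < N := Nat.lt_ceil.mpr (by exact_mod_cast hY)
    omega
  -- Gauss sum
  have hsum : ∑ m ∈ Finset.Ico 1 N, (m:ℝ) = ((N:ℝ) - 1) * N / 2 := by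
    have e1 : Finset.range N = insert 0 (Finset.Ico 1 N) := by
      rw [Finset.range_eq_Ico, ← Finset.insert_Ico_add_one_left_eq_Ico (show 0 < N by omega), zero_add]
    have e2 : ∑ m ∈ Finset.Ico 1 N, (m:ℝ) = ∑ m ∈ Finset.range N, (m:ℝ) := by
      rw [e1, Finset.sum_insert (by simp)]
      simp
    have e3 := Finset.sum_range_id_mul_two N
    have e4 : ((∑ i ∈ Finset.range N, i : ℕ) : ℝ) * 2 = (N:ℝ) * ((N:ℝ) - 1) := by
      rw [← Nat.cast_ofNat, ← Nat.cast_mul, e3]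
      push_cast [Nat.cast_sub hN1]
      ring
    rw [e2]
    push_cast at e4 ⊢
    linarith
  have hS : ∑ m ∈ Finset.Ico 1 N, (A + B * m)
      = ((N:ℝ) - 1) * A + B * (((N:ℝ) - 1) * N / 2) := by
    rw [Finset.sum_add_distrib, Finset.sum_const, Nat.card_Ico, ← Finset.mul_sum, hsum]
    rw [nsmul_eq_mul, Nat.cast_sub hN1]
    push_cast
    ring
  have hu : |((N:ℝ) - 1) - Y| ≤ 1 := abs_le.mpr ⟨by linarith, by linarith⟩
  have hv : |((N:ℝ) - 1) * N - Y^2| ≤ Y := by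
    refine abs_le.mpr ⟨?_, ?_⟩
    · nlinarith [mul_nonneg (sub_nonneg.mpr hYN) (show (0:ℝ) ≤ (N:ℝ) + Y - 1 by linarith)]
    · nlinarith [mul_le_mul (show (N:ℝ) - 1 ≤ Y by linarith) (show (N:ℝ) ≤ Y + 1 by linarith)
        (Nat.cast_nonneg N) (show (0:ℝ) ≤ Y by linarith)]
  have key : |(((N:ℝ) - 1) * A + B * (((N:ℝ) - 1) * N / 2)) - (A * Y + B * Y^2 / 2)|
      ≤ A + Y / 2 := by
    have e : (((N:ℝ) - 1) * A + B * (((N:ℝ) - 1) * N / 2)) - (A * Y + B * Y^2 / 2)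
        = A * (((N:ℝ) - 1) - Y) + B * ((((N:ℝ) - 1) * N - Y^2) / 2) := by ring
    rw [e]
    refine (abs_add_le _ _).trans ?_
    have t1 : |A * (((N:ℝ) - 1) - Y)| ≤ A := by
      rw [abs_mul, abs_of_pos hApos]
      nlinarith
    have t2 : |B * ((((N:ℝ) - 1) * N - Y^2) / 2)| ≤ Y / 2 := by
      rw [abs_mul, abs_div, abs_of_pos (show (0:ℝ) < 2 by norm_num)]
      have : |B| * (|((N:ℝ) - 1) * N - Y^2| / 2) ≤ 1 * (Y / 2) := by
        apply mul_le_mul hB1 (by linarith) (by positivity) zero_le_one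
      linarith
    linarith
  -- assemble
  have hGf : Gf n d (x, y) = (1 / (x:ℝ)) *
      ((((N:ℝ) - 1) * A + B * (((N:ℝ) - 1) * N / 2)) - (A * Y + B * Y^2 / 2)) := by
    simp only [Gf]
    rw [if_pos (show (x,y).2 < (x,y).1 ∧ 1 ≤ (x,y).2 ∧ Nat.gcd (x,y).1 (x,y).2 = 1 ∧
      1 < Ybound n d (x,y).1 (x,y).2 from ⟨hxy, hy, hgcd, hY⟩)]
    rw [hS]
    ring
  rw [hGf, abs_mul, abs_of_nonneg (by positivity : (0:ℝ) ≤ 1/(x:ℝ))]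
  have hfin : A + Y / 2 ≤ 5/2 * ((n:ℝ) / ((d:ℝ) * x)) := by linarith
  calc 1/(x:ℝ) * |(((N:ℝ) - 1) * A + B * (((N:ℝ) - 1) * N / 2)) - (A * Y + B * Y^2 / 2)|
      ≤ 1/(x:ℝ) * (A + Y / 2) := mul_le_mul_of_nonneg_left key (by positivity)
    _ ≤ 1/(x:ℝ) * (5/2 * ((n:ℝ) / ((d:ℝ) * x))) := mul_le_mul_of_nonneg_left hfin (by positivity)
    _ ≤ 3 * n / ((d:ℝ) * (x:ℝ)^2) := by
        have e : 1/(x:ℝ) * (5/2 * ((n:ℝ) / ((d:ℝ) * x))) = 5 * n / (2 * ((d:ℝ) * (x:ℝ)^2)) := by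
          field_simp
        rw [e, div_le_div_iff₀ (by positivity) (by positivity)]
        have ht : (0:ℝ) < (n:ℝ) * ((d:ℝ) * (x:ℝ)^2) := by positivity
        nlinarith [ht]

/-- vanishing outside a finite set -/
lemma Gf_support (n d : ℕ) (hd : 1 ≤ d) :
    ∀ p : ℕ × ℕ, p ∉ (Finset.Ico 1 n ×ˢ Finset.Ico 1 n) → Gf n d p = 0 := by
  rintro ⟨x, y⟩ hp
  by_cases hc : y < x ∧ 1 ≤ y ∧ Nat.gcd x y = 1 ∧ 1 < Ybound n d x y
  · exfalso
    obtain ⟨hxy, hy, -, hY⟩ := hc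
    obtain ⟨hxn, hyn, -⟩ := cond_facts n d x y hd hy hxy hY
    exact hp (Finset.mem_product.mpr ⟨Finset.mem_Ico.mpr ⟨hy.trans hxy.le, hxn⟩,
      Finset.mem_Ico.mpr ⟨hy, hyn⟩⟩)
  · simp only [Gf]
    exact if_neg hc

/-- extra constraints forced by nonvanishing -/
lemma Gf_constraints (n d x y : ℕ) (hd : 1 ≤ d) (h : Gf n d (x, y) ≠ 0) :
    y < x ∧ d * x ≤ n.sqrt := by
  by_cases hc : y < x ∧ 1 ≤ y ∧ Nat.gcd x y = 1 ∧ 1 < Ybound n d x y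
  · obtain ⟨hxy, hy, -, hY⟩ := hc
    obtain ⟨-, -, hsq⟩ := cond_facts n d x y hd hy hxy hY
    exact ⟨hxy, Nat.le_sqrt.mpr hsq⟩
  · exact absurd (by simp only [Gf]; exact if_neg hc) h

lemma dsum_bound (n d : ℕ) (hn : 0 < n) (hd : d ∈ n.divisors) :
    |∑' p : ℕ × ℕ, Gf n d p| ≤ 3 * n * Real.sqrt n / (d:ℝ)^2 := by
  classical
  have hd1 : 1 ≤ d := Nat.pos_of_mem_divisors hd
  have hd0 : (0:ℝ) < d := by exact_mod_cast hd1
  set K := n.sqrt / d with hK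
  rw [tsum_eq_sum (Gf_support n d hd1)]
  refine (Finset.abs_sum_le_sum_abs _ _).trans ?_
  have hpt : ∀ p ∈ Finset.Ico 1 n ×ˢ Finset.Ico 1 n, |Gf n d p| ≤
      (if p.2 < p.1 ∧ d * p.1 ≤ n.sqrt then 3 * n / ((d:ℝ) * (p.1:ℝ)^2) else 0) := by
    rintro ⟨a, b⟩ _
    by_cases h0 : Gf n d (a, b) = 0
    · rw [h0, abs_zero]
      split
      · positivity
      · exact le_refl 0
    · obtain ⟨h1, h2⟩ := Gf_constraints n d a b hd1 h0
      rw [if_pos (show (a,b).2 < (a,b).1 ∧ d * (a,b).1 ≤ n.sqrt from ⟨h1, h2⟩)]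
      exact term_bound n d a b hd1
  refine (Finset.sum_le_sum hpt).trans ?_
  rw [← Finset.sum_filter]
  have hsub : (Finset.Ico 1 n ×ˢ Finset.Ico 1 n).filter
        (fun p => p.2 < p.1 ∧ d * p.1 ≤ n.sqrt)
      ⊆ (Finset.Ico 1 (K+1) ×ˢ Finset.Ico 1 n).filter (fun p => p.2 < p.1) := by
    intro p hp
    rw [Finset.mem_filter, Finset.mem_product] at hp ⊢
    obtain ⟨⟨hx, hy⟩, hlt, hsq⟩ := hp
    refine ⟨⟨?_, hy⟩, hlt⟩
    rw [Finset.mem_Ico] at hx ⊢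
    refine ⟨hx.1, ?_⟩
    have hpK : p.1 ≤ K := by
      rw [hK, Nat.le_div_iff_mul_le hd1, mul_comm]
      exact hsq
    omega
  refine (Finset.sum_le_sum_of_subset_of_nonneg hsub (fun p _ _ => by positivity)).trans ?_
  rw [Finset.sum_filter, Finset.sum_product]
  have inner : ∀ x ∈ Finset.Ico 1 (K+1),
      (∑ y ∈ Finset.Ico 1 n, if (x, y).2 < (x, y).1 then
        3 * n / ((d:ℝ) * (((x, y).1 : ℕ):ℝ)^2) else 0) ≤ 3 * n / (d:ℝ) := by
    intro x hx
    rw [Finset.mem_Ico] at hx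
    have hx1 : (1:ℝ) ≤ x := by exact_mod_cast hx.1
    have hx0 : (0:ℝ) < x := by linarith
    have hcard : (((Finset.Ico 1 n).filter (fun y => y < x)).card : ℝ) ≤ (x:ℝ) := by
      have : ((Finset.Ico 1 n).filter (fun y => y < x)).card ≤ x := by
        calc ((Finset.Ico 1 n).filter (fun y => y < x)).card
            ≤ (Finset.range x).card := Finset.card_le_card (fun y hy => by
              rw [Finset.mem_filter] at hy
              exact Finset.mem_range.mpr hy.2)
          _ = x := Finset.card_range x
      exact_mod_cast this
    calc (∑ y ∈ Finset.Ico 1 n, if (x, y).2 < (x, y).1 then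
            3 * n / ((d:ℝ) * (((x, y).1 : ℕ):ℝ)^2) else 0)
        = ∑ y ∈ (Finset.Ico 1 n).filter (fun y => y < x),
            (3 * n / ((d:ℝ) * ((x:ℕ):ℝ)^2)) := (Finset.sum_filter _ _).symm
      _ = (((Finset.Ico 1 n).filter (fun y => y < x)).card : ℝ)
            * (3 * n / ((d:ℝ) * ((x:ℕ):ℝ)^2)) := by
          rw [Finset.sum_const, nsmul_eq_mul]
      _ ≤ (x:ℝ) * (3 * n / ((d:ℝ) * ((x:ℕ):ℝ)^2)) :=
          mul_le_mul_of_nonneg_right hcard (by positivity)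
      _ = 3 * n / ((d:ℝ) * (x:ℝ)) := by
          field_simp
      _ ≤ 3 * n / (d:ℝ) := by
          refine div_le_div_of_nonneg_left (by positivity) hd0 ?_
          nlinarith
  refine (Finset.sum_le_sum inner).trans ?_
  rw [Finset.sum_const, Nat.card_Ico, Nat.add_sub_cancel, nsmul_eq_mul]
  have hK2 : (K:ℝ) ≤ Real.sqrt n / d := by
    calc (K:ℝ) ≤ ((n.sqrt : ℕ):ℝ) / (d:ℝ) := Nat.cast_div_le
      _ ≤ Real.sqrt n / d := by
          gcongr
          exact Real.nat_sqrt_le_real_sqrt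
  calc (K:ℝ) * (3 * n / (d:ℝ))
      ≤ (Real.sqrt n / d) * (3 * n / (d:ℝ)) :=
        mul_le_mul_of_nonneg_right hK2 (by positivity)
    _ = 3 * n * Real.sqrt n / (d:ℝ)^2 := by
        field_simp

lemma Gtwo_bound (n : ℕ) (hn : 0 < n) : |Gtwo n| ≤ 6 * n * Real.sqrt n := by
  have e : Gtwo n = ∑ d ∈ n.divisors, ∑' p : ℕ × ℕ, Gf n d p := rfl
  rw [e]
  refine (Finset.abs_sum_le_sum_abs _ _).trans ?_
  have h1 : ∀ d ∈ n.divisors, |∑' p : ℕ × ℕ, Gf n d p|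
      ≤ 3 * (n:ℝ) * Real.sqrt n * (1/(d:ℝ)^2) := by
    intro d hd
    have := dsum_bound n d hn hd
    rw [mul_one_div]
    exact this
  refine (Finset.sum_le_sum h1).trans ?_
  rw [← Finset.mul_sum]
  have h2 : ∑ d ∈ n.divisors, (1:ℝ)/(d:ℝ)^2 ≤ 2 := by
    have hn1 : n - 1 + 1 = n := Nat.succ_pred_eq_of_pos hn
    have hb := sq_sum_bound (n-1)
    rw [hn1] at hb
    have hsub : n.divisors ⊆ Finset.Icc 1 n := by
      intro d hd
      rw [Finset.mem_Icc]
      exact ⟨Nat.pos_of_mem_divisors hd, Nat.divisor_le hd⟩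
    refine le_trans (Finset.sum_le_sum_of_subset_of_nonneg hsub
      (fun _ _ _ => by positivity)) (hb.trans ?_)
    have : (0:ℝ) ≤ 1/(((n - 1 : ℕ) : ℝ) + 1) := by positivity
    linarith
  have hnn : (0:ℝ) ≤ 3 * (n:ℝ) * Real.sqrt n := by positivity
  calc 3 * (n:ℝ) * Real.sqrt n * (∑ d ∈ n.divisors, (1:ℝ)/(d:ℝ)^2)
      ≤ 3 * (n:ℝ) * Real.sqrt n * 2 := mul_le_mul_of_nonneg_left h2 hnn
    _ = 6 * n * Real.sqrt n := by ring

theorem stmt_5 :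
    ∀ ε : ℝ, 0 < ε → ∃ K : ℝ, 0 < K ∧ ∀ n : ℕ, 0 < n →
      |Gtwo n| ≤ K * (n : ℝ) ^ ((3 : ℝ) / 2 + ε) := by
  intro ε hε
  refine ⟨6, by norm_num, fun n hn => ?_⟩
  have h1 : (1:ℝ) ≤ (n:ℝ) := by exact_mod_cast hn
  have h2 : |Gtwo n| ≤ 6 * n * Real.sqrt n := Gtwo_bound n hn
  have hn0 : (0:ℝ) < n := by exact_mod_cast hn
  have h3 : (n:ℝ) * Real.sqrt n = (n:ℝ) ^ ((3:ℝ)/2) := by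
    rw [Real.sqrt_eq_rpow, show (3:ℝ)/2 = 1 + 1/2 by norm_num, Real.rpow_add hn0,
      Real.rpow_one]
  calc |Gtwo n| ≤ 6 * ((n:ℝ) * Real.sqrt n) := by linarith [Gtwo_bound n hn]
    _ = 6 * (n:ℝ) ^ ((3:ℝ)/2) := by rw [h3]
    _ ≤ 6 * (n:ℝ) ^ ((3:ℝ)/2 + ε) := by
        have := Real.rpow_le_rpow_of_exponent_le h1 (show (3:ℝ)/2 ≤ 3/2 + ε by linarith)
        linarith
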